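/- arXiv:0804.3744 — 10 statements merged into one kernel-verified Lean document; each statement's English description precedes it below -/
import Mathlib

section
/- Let κ : [0,∞) → [0,∞) be continuous and satisfy the self-gravitation condition κ(x) < κ̄(x) for all x > 0, where κ̄(x) = (2/x²)∫₀ˣ κ(t)·t dt is the mean surface density. Then κ(x) < κ(0) for all x > 0. -/
/-- If `κ : [0,∞) → [0,∞)` is continuous and self-gravitating,
i.e. `κ x < κ̄ x = (2/x²) ∫₀ˣ κ t · t dt` for all `x > 0`, then `κ x < κ 0` for all `x > 0`. -/
theorem surface_density_lt_central
    (κ : ℝ → ℝ)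
    (hcont : ContinuousOn κ (Set.Ici 0))
    (hnonneg : ∀ x ∈ Set.Ici (0 : ℝ), 0 ≤ κ x)
    (hself : ∀ x : ℝ, 0 < x →
      κ x < (2 / x ^ 2) * ∫ t in (0 : ℝ)..x, κ t * t) :
    ∀ x : ℝ, 0 < x → κ x < κ 0 := by
  have key : ∀ x : ℝ, 0 < x → ∀ B : ℝ, (∀ t ∈ Set.Icc (0:ℝ) x, κ t ≤ B) →
      (2 / x ^ 2) * ∫ t in (0:ℝ)..x, κ t * t ≤ B := by
    intro x hx B hB
    have hint : IntervalIntegrable (fun t => κ t * t) MeasureTheory.volume 0 x := by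
      apply ContinuousOn.intervalIntegrable
      rw [Set.uIcc_of_le hx.le]
      exact (hcont.mono (fun t ht => ht.1)).mul continuousOn_id
    have hint2 : IntervalIntegrable (fun t => B * t) MeasureTheory.volume 0 x :=
      (continuous_const.mul continuous_id).intervalIntegrable _ _
    have hmono : (∫ t in (0:ℝ)..x, κ t * t) ≤ ∫ t in (0:ℝ)..x, B * t := by
      apply intervalIntegral.integral_mono_on hx.le hint hint2
      intro t ht
      exact mul_le_mul_of_nonneg_right (hB t ht) ht.1
    have hval : (∫ t in (0:ℝ)..x, B * t) = B * (x ^ 2 / 2) := by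
      rw [intervalIntegral.integral_const_mul, integral_id]
      ring
    calc (2 / x ^ 2) * ∫ t in (0:ℝ)..x, κ t * t
        ≤ (2 / x ^ 2) * (B * (x ^ 2 / 2)) := by
          apply mul_le_mul_of_nonneg_left _ (by positivity)
          rw [← hval]; exact hmono
      _ = B := by field_simp
  have hle : ∀ x ∈ Set.Ici (0:ℝ), κ x ≤ κ 0 := by
    intro x hx
    rcases eq_or_lt_of_le (Set.mem_Ici.mp hx) with h0 | hx0
    · rw [← h0]
    obtain ⟨c, hc, hmax⟩ := (isCompact_Icc (a:=(0:ℝ)) (b:=x)).exists_isMaxOn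
      (Set.nonempty_Icc.mpr hx) (hcont.mono Set.Icc_subset_Ici_self)
    rcases eq_or_lt_of_le hc.1 with hc0 | hc0
    · have hxm : κ x ≤ κ c := hmax (Set.mem_Icc.mpr ⟨le_of_lt hx0, le_refl x⟩)
      rw [← hc0] at hxm; exact hxm
    · exfalso
      have h1 := hself c hc0
      have h2 := key c hc0 (κ c) (fun t ht => hmax ⟨ht.1, ht.2.trans hc.2⟩)
      linarith
  intro x hx
  calc κ x < (2/x^2) * ∫ t in (0:ℝ)..x, κ t * t := hself x hx
    _ ≤ κ 0 := key x hx (κ 0) (fun t ht => hle t ht.1)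
end

section
/- Let κ : [0,∞) → [0,∞) be continuous, self-gravitating (κ(x) < κ̄(x) for all x > 0, where κ̄(x) = (2/x²)∫₀ˣ κ(t)·t dt), and satisfy x·κ(x) → C₂ as x → ∞ for some constant 0 ≤ C₂ < ∞. Define α(x) = (2/x)∫₀ˣ κ(t)·t dt. Then there exists an Einstein ring, i.e. some x > 0 with α(x) = x, if and only if κ(0) > 1. -/
open Set MeasureTheory Filter intervalIntegral

noncomputable def ERF (κ : ℝ → ℝ) (x : ℝ) : ℝ := ∫ t in (0:ℝ)..x, κ t * t
noncomputable def ERk (κ : ℝ → ℝ) (x : ℝ) : ℝ := 2 * ERF κ x / x ^ 2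

lemma ER_contOn {κ : ℝ → ℝ} (hcont : ContinuousOn κ (Set.Ici 0)) :
    ContinuousOn (fun t => κ t * t) (Set.Ici 0) :=
  hcont.mul continuousOn_id

lemma ER_int {κ : ℝ → ℝ} (hcont : ContinuousOn κ (Set.Ici 0)) {a x : ℝ}
    (ha : 0 ≤ a) (hx : 0 ≤ x) :
    IntervalIntegrable (fun t => κ t * t) volume a x := by
  apply ((ER_contOn hcont).mono ?_).intervalIntegrable
  rw [Set.uIcc]
  intro t ht
  exact le_trans (le_inf ha hx) ht.1

lemma ER_deriv {κ : ℝ → ℝ} (hcont : ContinuousOn κ (Set.Ici 0)) {x : ℝ} (hx : 0 < x) :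
    HasDerivAt (ERF κ) (κ x * x) x := by
  apply intervalIntegral.integral_hasDerivAt_right (ER_int hcont le_rfl hx.le)
  · exact ContinuousOn.stronglyMeasurableAtFilter isOpen_Ioi
      ((ER_contOn hcont).mono Set.Ioi_subset_Ici_self) x hx
  · exact (hcont.continuousAt (Ici_mem_nhds hx)).mul continuousAt_id

lemma ERk_deriv {κ : ℝ → ℝ} (hcont : ContinuousOn κ (Set.Ici 0)) {x : ℝ} (hx : 0 < x) :
    HasDerivAt (ERk κ) (2 / x * (κ x - ERk κ x)) x := by
  have hxne : x ≠ 0 := hx.ne'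
  have h1 : HasDerivAt (fun y => 2 * ERF κ y) (2 * (κ x * x)) x :=
    (ER_deriv hcont hx).const_mul 2
  have h2 : HasDerivAt (fun y : ℝ => y ^ 2) (2 * x) x := by
    simpa using hasDerivAt_pow 2 x
  have h3 : HasDerivAt (fun y => 2 * ERF κ y / y ^ 2) _ x := h1.div h2 (by positivity)
  convert h3 using 1
  · rfl
  unfold ERk
  field_simp

lemma ERk_le {κ : ℝ → ℝ} (hcont : ContinuousOn κ (Set.Ici 0)) {x M : ℝ} (hx : 0 < x)
    (hM : ∀ t ∈ Set.Icc 0 x, κ t ≤ M) : ERk κ x ≤ M := by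
  have hFM : ERF κ x ≤ ∫ t in (0:ℝ)..x, M * t := by
    apply intervalIntegral.integral_mono_on hx.le (ER_int hcont le_rfl hx.le)
      (by apply Continuous.intervalIntegrable; continuity)
    intro t ht
    exact mul_le_mul_of_nonneg_right (hM t ht) ht.1
  rw [intervalIntegral.integral_const_mul, integral_id] at hFM
  rw [ERk, div_le_iff₀ (by positivity)]
  nlinarith

lemma ERk_ge {κ : ℝ → ℝ} (hcont : ContinuousOn κ (Set.Ici 0)) {x c : ℝ} (hx : 0 < x)
    (hM : ∀ t ∈ Set.Icc 0 x, c ≤ κ t) : c ≤ ERk κ x := by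
  have hFM : (∫ t in (0:ℝ)..x, c * t) ≤ ERF κ x := by
    apply intervalIntegral.integral_mono_on hx.le
      (by apply Continuous.intervalIntegrable; continuity) (ER_int hcont le_rfl hx.le)
    intro t ht
    exact mul_le_mul_of_nonneg_right (hM t ht) ht.1
  rw [intervalIntegral.integral_const_mul, integral_id] at hFM
  rw [ERk, le_div_iff₀ (by positivity)]
  nlinarith

lemma ERk_anti {κ : ℝ → ℝ} (hcont : ContinuousOn κ (Set.Ici 0))
    (hself : ∀ x : ℝ, 0 < x → κ x < (2 / x ^ 2) * ∫ t in (0 : ℝ)..x, κ t * t) :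
    StrictAntiOn (ERk κ) (Set.Ioi 0) := by
  have key : ∀ x ∈ Set.Ioi (0:ℝ), κ x < ERk κ x := by
    intro x hx
    have h := hself x hx
    have heq : (2 / x ^ 2) * ∫ t in (0 : ℝ)..x, κ t * t = ERk κ x := by
      rw [ERk, ERF]; ring
    linarith [heq ▸ h]
  apply strictAntiOn_of_deriv_neg (convex_Ioi 0)
  · exact fun x hx => ((ERk_deriv hcont hx).continuousAt).continuousWithinAt
  · intro x hx
    rw [interior_Ioi] at hx
    have hx0 : (0:ℝ) < x := hx
    rw [(ERk_deriv hcont hx0).deriv]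
    have h1 := key x hx
    have h2 : (0:ℝ) < 2 / x := by positivity
    exact mul_neg_of_pos_of_neg h2 (by linarith)

/-- **Existence.** For a continuous, self-gravitating
`κ : [0,∞) → [0,∞)` with `x·κ x → C₂` as `x → ∞` (`0 ≤ C₂ < ∞`), and the normalized
deflection angle `α x = (2/x) ∫₀ˣ κ t · t dt`, an Einstein ring (some `x > 0` with
`α x = x`) exists if and only if `κ 0 > 1`. -/
theorem einstein_ring_exists_iff
    (κ : ℝ → ℝ) (C₂ : ℝ) (α : ℝ → ℝ)
    (hcont : ContinuousOn κ (Set.Ici 0))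
    (hnonneg : ∀ x ∈ Set.Ici (0 : ℝ), 0 ≤ κ x)
    (hself : ∀ x : ℝ, 0 < x →
      κ x < (2 / x ^ 2) * ∫ t in (0 : ℝ)..x, κ t * t)
    (hC₂ : 0 ≤ C₂)
    (hlim : Filter.Tendsto (fun x => x * κ x) Filter.atTop (nhds C₂))
    (hα : ∀ x : ℝ, 0 < x → α x = (2 / x) * ∫ t in (0 : ℝ)..x, κ t * t) :
    (∃ x : ℝ, 0 < x ∧ α x = x) ↔ 1 < κ 0 := by
  have hcw : Filter.Tendsto κ (nhdsWithin 0 (Set.Ici 0)) (nhds (κ 0)) :=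
    hcont 0 Set.self_mem_Ici
  constructor
  · rintro ⟨x₀, hx₀, hring⟩
    have hk1 : ERk κ x₀ = 1 := by
      have h := hα x₀ hx₀
      rw [h] at hring
      rw [ERk, ERF, div_eq_one_iff_eq (by positivity)]
      have hxne : x₀ ≠ 0 := hx₀.ne'
      field_simp at hring
      nlinarith [hring]
    have hhalf : x₀ / 2 ∈ Set.Ioi (0:ℝ) := by simp; linarith
    have hc : 1 < ERk κ (x₀ / 2) := by
      have := (ERk_anti hcont hself) hhalf (Set.mem_Ioi.2 hx₀) (by linarith)
      rw [hk1] at this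
      exact this
    set c := ERk κ (x₀ / 2) with hcdef
    by_contra h
    push_neg at h
    have hev : κ ⁻¹' Set.Iio ((1 + c) / 2) ∈ nhdsWithin 0 (Set.Ici 0) :=
      hcw (Iio_mem_nhds (by linarith))
    obtain ⟨u, hu0, hu⟩ := mem_nhdsGE_iff_exists_Icc_subset.1 hev
    set t := min u (x₀ / 2) with htdef
    have ht0 : 0 < t := lt_min hu0 (by linarith)
    have h1 : ERk κ t ≤ (1 + c) / 2 := by
      apply ERk_le hcont ht0
      intro s hs
      exact (hu ⟨hs.1, hs.2.trans (min_le_left _ _)⟩).le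
    have h2 : c ≤ ERk κ t :=
      (ERk_anti hcont hself).antitoneOn (Set.mem_Ioi.2 ht0) hhalf (min_le_right _ _)
    linarith
  · intro hκ0
    have hev : κ ⁻¹' Set.Ioi ((1 + κ 0) / 2) ∈ nhdsWithin 0 (Set.Ici 0) :=
      hcw (Ioi_mem_nhds (by linarith))
    obtain ⟨u, hu0, hu⟩ := mem_nhdsGE_iff_exists_Icc_subset.1 hev
    have hδ : 1 < ERk κ u := by
      have : (1 + κ 0) / 2 ≤ ERk κ u :=
        ERk_ge hcont hu0 (fun t ht => (hu ht).le)
      linarith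
    -- find large b with ERk κ b < 1
    have hevb : ∀ᶠ x in Filter.atTop, x * κ x < C₂ + 1 :=
      hlim (Iio_mem_nhds (by linarith))
    obtain ⟨R0, hR0⟩ := Filter.eventually_atTop.1 hevb
    set R := max R0 1 with hRdef
    have hR1 : (1:ℝ) ≤ R := le_max_right _ _
    have hRbound : ∀ t, R ≤ t → κ t * t ≤ C₂ + 1 := by
      intro t ht
      have := hR0 t (le_trans (le_max_left _ _) ht)
      rw [mul_comm]
      linarith
    set E := ERF κ R with hEdef
    have hE0 : 0 ≤ E := by
      apply intervalIntegral.integral_nonneg (by linarith)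
      intro t ht
      exact mul_nonneg (hnonneg t ht.1) ht.1
    set b := max (max R (u + 1)) (max (Real.sqrt (8 * E) + 1) (4 * (C₂ + 1) + 1)) with hbdef
    have hbR : R ≤ b := le_trans (le_max_left _ _) (le_max_left _ _)
    have hbu : u + 1 ≤ b := le_trans (le_max_right _ _) (le_max_left _ _)
    have hbs : Real.sqrt (8 * E) + 1 ≤ b := le_trans (le_max_left _ _) (le_max_right _ _)
    have hbc : 4 * (C₂ + 1) + 1 ≤ b := le_trans (le_max_right _ _) (le_max_right _ _)
    have hb0 : (0:ℝ) < b := lt_of_lt_of_le (by linarith) hbc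
    have hFb : ERF κ b ≤ E + (C₂ + 1) * b := by
      have hsplit : E + (∫ t in R..b, κ t * t) = ERF κ b := by
        rw [hEdef, ERF, ERF]
        exact intervalIntegral.integral_add_adjacent_intervals
          (ER_int hcont le_rfl (by linarith)) (ER_int hcont (by linarith) (by linarith))
      have hI : (∫ t in R..b, κ t * t) ≤ (C₂ + 1) * (b - R) := by
        have := intervalIntegral.integral_mono_on hbR
          (ER_int hcont (by linarith) (by linarith)) intervalIntegrable_const
          (fun t ht => hRbound t ht.1)
        rwa [intervalIntegral.integral_const, smul_eq_mul, mul_comm] at this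
      rw [← hsplit]
      nlinarith [mul_nonneg (by linarith : (0:ℝ) ≤ C₂ + 1) (by linarith : (0:ℝ) ≤ R)]
    have hb1 : ERk κ b < 1 := by
      rw [ERk, div_lt_one (by positivity)]
      have h8 : 8 * E < b ^ 2 := by
        have hs : Real.sqrt (8 * E) < b := by linarith
        exact (Real.sqrt_lt' hb0).1 hs
      nlinarith [mul_le_mul_of_nonneg_right hbc hb0.le]
    have hub : u ≤ b := by linarith
    have hcb : ContinuousOn (ERk κ) (Set.Icc u b) := fun x hx =>
      ((ERk_deriv hcont (lt_of_lt_of_le hu0 hx.1)).continuousAt).continuousWithinAt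
    obtain ⟨x, hx, hx1⟩ := intermediate_value_Icc' hub hcb ⟨hb1.le, hδ.le⟩
    have hxpos : 0 < x := lt_of_lt_of_le hu0 hx.1
    refine ⟨x, hxpos, ?_⟩
    rw [hα x hxpos]
    rw [ERk, ERF, div_eq_one_iff_eq (by positivity)] at hx1
    rw [div_mul_eq_mul_div, div_eq_iff hxpos.ne']
    nlinarith [hx1]
end

section
/- Let κ : [0,∞) → [0,∞) be continuous and self-gravitating (κ(x) < κ̄(x) for all x > 0, where κ̄(x) = (2/x²)∫₀ˣ κ(t)·t dt), and define α(x) = (2/x)∫₀ˣ κ(t)·t dt. Then there is at most one x > 0 with α(x) = x; that is, a single-plane gravitational lens produces at most one Einstein ring. -/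
/-- **Uniqueness.** For a continuous, self-gravitating
`κ : [0,∞) → [0,∞)` and the normalized deflection angle
`α x = (2/x) ∫₀ˣ κ t · t dt`, there is at most one `x > 0` with `α x = x`:
a single-plane gravitational lens produces at most one Einstein ring. -/
theorem einstein_ring_unique
    (κ : ℝ → ℝ) (α : ℝ → ℝ)
    (hcont : ContinuousOn κ (Set.Ici 0))
    (hnonneg : ∀ x ∈ Set.Ici (0 : ℝ), 0 ≤ κ x)
    (hself : ∀ x : ℝ, 0 < x →
      κ x < (2 / x ^ 2) * ∫ t in (0 : ℝ)..x, κ t * t)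
    (hα : ∀ x : ℝ, 0 < x → α x = (2 / x) * ∫ t in (0 : ℝ)..x, κ t * t) :
    ∀ x₁ x₂ : ℝ, 0 < x₁ → 0 < x₂ → α x₁ = x₁ → α x₂ = x₂ → x₁ = x₂ := by
  intro x₁ x₂ h₁ h₂ he₁ he₂
  set F : ℝ → ℝ := fun x => ∫ t in (0:ℝ)..x, κ t * t with hFdef
  set g : ℝ → ℝ := fun x => F x / x ^ 2 with hgdef
  have hderivF : ∀ x : ℝ, 0 < x → HasDerivAt F (κ x * x) x := by
    intro x hx
    have hca : ContinuousAt (fun t => κ t * t) x :=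
      (hcont.continuousAt (Ici_mem_nhds hx)).mul continuousAt_id
    have hInt : IntervalIntegrable (fun t => κ t * t) MeasureTheory.volume 0 x := by
      apply ContinuousOn.intervalIntegrable
      apply ContinuousOn.mul (hcont.mono ?_) continuousOn_id
      rw [Set.uIcc_of_le hx.le]; exact Set.Icc_subset_Ici_self
    have hmeas : StronglyMeasurableAtFilter (fun t => κ t * t) (nhds x) MeasureTheory.volume := by
      refine ContinuousOn.stronglyMeasurableAtFilter isOpen_Ioi ?_ x hx
      exact ((hcont.mono (Set.Ioi_subset_Ici le_rfl)).mul continuousOn_id)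
    exact intervalIntegral.integral_hasDerivAt_right hInt hmeas hca
  have hderivg : ∀ x : ℝ, 0 < x →
      HasDerivAt g ((κ x * x * x ^ 2 - F x * (2 * x ^ 1)) / (x ^ 2) ^ 2) x := by
    intro x hx
    exact (hderivF x hx).div (hasDerivAt_pow 2 x) (pow_ne_zero 2 hx.ne')
  have hanti : StrictAntiOn g (Set.Ioi 0) := by
    apply strictAntiOn_of_deriv_neg (convex_Ioi 0)
    · intro x hx
      exact ((hderivg x hx).continuousAt).continuousWithinAt
    · intro x hx
      rw [interior_Ioi] at hx
      rw [(hderivg x hx).deriv]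
      have hs := hself x hx
      have hx2 : (0:ℝ) < x ^ 2 := pow_pos hx 2
      have hs' : κ x * x ^ 2 < 2 * F x := by
        have h2 : κ x < 2 * F x / x ^ 2 := by
          calc κ x < 2 / x ^ 2 * F x := hs
          _ = 2 * F x / x ^ 2 := by ring
        exact (lt_div_iff₀ hx2).mp h2
      apply div_neg_of_neg_of_pos
      · nlinarith [mul_lt_mul_of_pos_right hs' hx]
      · exact pow_pos (pow_pos hx 2) 2
  have key : ∀ x : ℝ, 0 < x → α x = x → g x = 1 / 2 := by
    intro x hx he
    have := hα x hx
    rw [he] at this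
    simp only [hgdef]
    field_simp at this ⊢
    nlinarith [this]
  exact hanti.injOn h₁ h₂ (by rw [key x₁ h₁ he₁, key x₂ h₂ he₂])
end

section
/- Let κ : [0,∞) → [0,∞) be continuous and self-gravitating (κ(x) < κ̄(x) for all x > 0, where κ̄(x) = (2/x²)∫₀ˣ κ(t)·t dt), and define α(x) = (2/x)∫₀ˣ κ(t)·t dt. Then α is differentiable on (0,∞) with α′(x) = 2κ(x) − α(x)/x, and at any Einstein ring radius x_E > 0 (i.e. α(x_E) = x_E) one has α′(x_E) = 2κ(x_E) − 1 < 1. -/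
/-- For a continuous, self-gravitating `κ : [0,∞) → [0,∞)` and the
normalized deflection angle `α x = (2/x) ∫₀ˣ κ t · t dt`, the map `α` is differentiable
on `(0,∞)` with `α' x = 2·κ x − α x / x`, and at any Einstein ring radius `x_E > 0`
(i.e. `α x_E = x_E`) one has `α'(x_E) = 2·κ x_E − 1 < 1`. -/
theorem deflection_angle_deriv_at_ring
    (κ : ℝ → ℝ) (α : ℝ → ℝ)
    (hcont : ContinuousOn κ (Set.Ici 0))
    (hnonneg : ∀ x ∈ Set.Ici (0 : ℝ), 0 ≤ κ x)
    (hself : ∀ x : ℝ, 0 < x →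
      κ x < (2 / x ^ 2) * ∫ t in (0 : ℝ)..x, κ t * t)
    (hα : ∀ x : ℝ, 0 < x → α x = (2 / x) * ∫ t in (0 : ℝ)..x, κ t * t) :
    (∀ x : ℝ, 0 < x → HasDerivAt α (2 * κ x - α x / x) x) ∧
    (∀ xE : ℝ, 0 < xE → α xE = xE →
      HasDerivAt α (2 * κ xE - 1) xE ∧ 2 * κ xE - 1 < 1) := by
  set f : ℝ → ℝ := fun t => κ t * t with hf
  have hfc : ContinuousOn f (Set.Ici 0) := hcont.mul continuousOn_id
  have hmain : ∀ x : ℝ, 0 < x → HasDerivAt α (2 * κ x - α x / x) x := by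
    intro x hx
    have hxIci : Set.Ici (0 : ℝ) ∈ nhds x := Ici_mem_nhds (by linarith)
    have hfint : IntervalIntegrable f MeasureTheory.volume 0 x :=
      (hfc.mono (by rw [Set.uIcc_of_le hx.le]; exact Set.Icc_subset_Ici_self)).intervalIntegrable
    have hfca : ContinuousAt f x := hfc.continuousAt hxIci
    have hmeas : StronglyMeasurableAtFilter f (nhds x) :=
      ⟨Set.Ici 0, hxIci, hfc.aestronglyMeasurable measurableSet_Ici⟩
    have hF : HasDerivAt (fun u => ∫ t in (0:ℝ)..u, f t) (f x) x :=
      intervalIntegral.integral_hasDerivAt_right hfint hmeas hfca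
    have hinv : HasDerivAt (fun u : ℝ => 2 / u) (-2 / x ^ 2) x := by
      have h := (hasDerivAt_inv (ne_of_gt hx)).const_mul (2:ℝ)
      have : (2:ℝ) * (-(x ^ 2)⁻¹) = -2 / x ^ 2 := by ring
      simpa [div_eq_mul_inv, this] using h
    have hg : HasDerivAt (fun u : ℝ => (2 / u) * ∫ t in (0:ℝ)..u, f t)
        ((-2 / x ^ 2) * (∫ t in (0:ℝ)..x, f t) + (2 / x) * f x) x := hinv.mul hF
    have heq : (fun u : ℝ => (2 / u) * ∫ t in (0:ℝ)..u, f t) =ᶠ[nhds x] α := by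
      filter_upwards [Ioi_mem_nhds hx] with u hu
      exact (hα u hu).symm
    have hval : ((-2 / x ^ 2) * (∫ t in (0:ℝ)..x, f t) + (2 / x) * f x)
        = 2 * κ x - α x / x := by
      rw [hα x hx, hf]
      field_simp
      ring
    exact hval ▸ heq.hasDerivAt_iff.mp hg
  refine ⟨hmain, fun xE hxE hring => ?_⟩
  have haq : α xE / xE = 1 := by rw [hring]; field_simp
  have h1 : HasDerivAt α (2 * κ xE - 1) xE := by
    have := hmain xE hxE
    rwa [haq] at this
  have h2 : κ xE < 1 := by
    have := hself xE hxE
    have h3 : (2 / xE ^ 2) * (∫ t in (0:ℝ)..xE, κ t * t) = α xE / xE := by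
      rw [hα xE hxE, pow_two]
      rw [div_mul_eq_mul_div, div_mul_eq_mul_div, div_div]
    rw [h3, haq] at this
    exact this
  exact ⟨h1, by linarith⟩
end

section
/- Let ξ₀ > 0, 0 ≤ β ≤ 1, c ≥ 1, and m⁽¹⁾, m⁽²⁾ ∈ (0,1) with m⁽¹⁾ + m⁽²⁾ = 1. Define m₊ = ξ₀(m⁽¹⁾ + c·m⁽²⁾), m₋ = ξ₀(m⁽¹⁾ − c·m⁽²⁾), and F : (0,∞) → ℝ by F(x) = 1 − m₊/x if x ≥ β·ξ₀·m⁽¹⁾ and F(x) = 1 − m₋/x if 0 < x < β·ξ₀·m⁽¹⁾. Then the set of x > 0 with F(x) = 0 is exactly {m₊} if it is not the case that 0 < m₋ < β·ξ₀·m⁽¹⁾, and exactly {m₊, m₋} if 0 < m₋ < β·ξ₀·m⁽¹⁾. Hence two aligned singular isothermal spheres in different lens planes produce either one or two Einstein rings of a single aligned point source. -/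
/-- For two aligned singular isothermal spheres in two lens planes,
with `m₊ = ξ₀(m⁽¹⁾ + c·m⁽²⁾)`, `m₋ = ξ₀(m⁽¹⁾ − c·m⁽²⁾)` and radial map
`F x = 1 − m₊/x` for `x ≥ β·ξ₀·m⁽¹⁾`, `F x = 1 − m₋/x` for `0 < x < β·ξ₀·m⁽¹⁾`,
the Einstein-ring set `{x > 0 | F x = 0}` equals `{m₊}` unless `0 < m₋ < β·ξ₀·m⁽¹⁾`,
in which case it equals `{m₊, m₋}`: one or two Einstein rings of a single source. -/
theorem isothermal_two_plane_einstein_rings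
    (ξ₀ β c m₁ m₂ : ℝ)
    (hξ₀ : 0 < ξ₀) (hβ0 : 0 ≤ β) (hβ1 : β ≤ 1) (hc : 1 ≤ c)
    (hm₁ : m₁ ∈ Set.Ioo (0 : ℝ) 1) (hm₂ : m₂ ∈ Set.Ioo (0 : ℝ) 1)
    (hsum : m₁ + m₂ = 1)
    (mp mm : ℝ)
    (hmp : mp = ξ₀ * (m₁ + c * m₂))
    (hmm : mm = ξ₀ * (m₁ - c * m₂))
    (F : ℝ → ℝ)
    (hF : ∀ x : ℝ, 0 < x →
      F x = if β * ξ₀ * m₁ ≤ x then 1 - mp / x else 1 - mm / x) :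
    (¬ (0 < mm ∧ mm < β * ξ₀ * m₁) → {x : ℝ | 0 < x ∧ F x = 0} = {mp}) ∧
    ((0 < mm ∧ mm < β * ξ₀ * m₁) → {x : ℝ | 0 < x ∧ F x = 0} = {mp, mm}) := by
  obtain ⟨hm₁0, hm₁1⟩ := hm₁
  obtain ⟨hm₂0, hm₂1⟩ := hm₂
  have hmp_pos : 0 < mp := by
    rw [hmp]
    nlinarith [mul_pos hξ₀ hm₁0, mul_pos hξ₀ hm₂0, mul_pos (mul_pos hξ₀ hm₂0) (lt_of_lt_of_le one_pos hc)]
  have ht_le : β * ξ₀ * m₁ ≤ mp := by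
    rw [hmp]
    nlinarith [mul_pos hξ₀ hm₁0, mul_nonneg (mul_nonneg (sub_nonneg.2 hβ1) hξ₀.le) hm₁0.le, mul_pos (mul_pos hξ₀ hm₂0) (lt_of_lt_of_le one_pos hc)]
  have key : ∀ x : ℝ, 0 < x → (F x = 0 ↔ (x = mp ∨ (x = mm ∧ 0 < mm ∧ mm < β * ξ₀ * m₁))) := by
    intro x hx
    rw [hF x hx]
    split_ifs with h
    · constructor
      · intro h0
        left
        field_simp at h0
        linarith
      · rintro (rfl | ⟨rfl, _, hlt⟩)
        · field_simp; norm_num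
        · linarith
    · push_neg at h
      constructor
      · intro h0
        right
        field_simp at h0
        have : x = mm := by linarith
        exact ⟨this, this ▸ hx, this ▸ h⟩
      · rintro (rfl | ⟨rfl, _, _⟩)
        · exact absurd ht_le (by linarith)
        · field_simp; norm_num
  constructor
  · intro hno
    ext x
    simp only [Set.mem_setOf_eq, Set.mem_singleton_iff]
    constructor
    · rintro ⟨hx, h0⟩
      rcases (key x hx).1 h0 with h | ⟨_, h1, h2⟩
      · exact h
      · exact absurd ⟨h1, h2⟩ hno
    · rintro rfl
      exact ⟨hmp_pos, (key _ hmp_pos).2 (Or.inl rfl)⟩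
  · rintro ⟨h1, h2⟩
    ext x
    simp only [Set.mem_setOf_eq, Set.mem_insert_iff, Set.mem_singleton_iff]
    constructor
    · rintro ⟨hx, h0⟩
      rcases (key x hx).1 h0 with h | ⟨h, _⟩
      · exact Or.inl h
      · exact Or.inr h
    · rintro (rfl | rfl)
      · exact ⟨hmp_pos, (key _ hmp_pos).2 (Or.inl rfl)⟩
      · exact ⟨h1, (key _ h1).2 (Or.inr ⟨rfl, h1, h2⟩)⟩
end

section
/- Let ξ₀ > 0, 0 ≤ β ≤ 1, c ≥ 1, m⁽¹⁾, m⁽²⁾ ∈ (0,1) with m⁽¹⁾ + m⁽²⁾ = 1, and set m₊ = ξ₀(m⁽¹⁾ + c·m⁽²⁾), m₋ = ξ₀(m⁽¹⁾ − c·m⁽²⁾), b = β·ξ₀·m⁽¹⁾. Define the signed magnification μ(x) = 1/(1 − m₊/|x|) if |x| ≥ b and μ(x) = 1/(1 − m₋/|x|) if 0 < |x| < b. Suppose y > 0 lies in the maximal domain where all four images exist, i.e. 0 < y + m₋ < b, y − m₊ ≤ −b, and −b < y − m₋ < 0, and set x₁ = y + m₊, x₂ = y + m₋, x₃ = y − m₊,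 x₄ = y − m₋. Then μ(x₁) + μ(x₂) + μ(x₃) + μ(x₄) = 4. -/
/-- **magnification invariant, isothermal case.** With signed
magnification `μ x = 1/(1 − m₊/|x|)` for `|x| ≥ b` and `μ x = 1/(1 − m₋/|x|)` for
`0 < |x| < b`, if `y > 0` lies in the maximal domain where all four images
`x₁ = y + m₊`, `x₂ = y + m₋`, `x₃ = y − m₊`, `x₄ = y − m₋` exist, then
`μ x₁ + μ x₂ + μ x₃ + μ x₄ = 4`. -/
theorem isothermal_two_plane_magnification_invariant
    (ξ₀ β c m₁ m₂ : ℝ)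
    (hξ₀ : 0 < ξ₀) (hβ0 : 0 ≤ β) (hβ1 : β ≤ 1) (hc : 1 ≤ c)
    (hm₁ : m₁ ∈ Set.Ioo (0 : ℝ) 1) (hm₂ : m₂ ∈ Set.Ioo (0 : ℝ) 1)
    (hsum : m₁ + m₂ = 1)
    (mp mm b : ℝ)
    (hmp : mp = ξ₀ * (m₁ + c * m₂))
    (hmm : mm = ξ₀ * (m₁ - c * m₂))
    (hb : b = β * ξ₀ * m₁)
    (μ : ℝ → ℝ)
    (hμ : ∀ x : ℝ, x ≠ 0 →
      μ x = if b ≤ |x| then 1 / (1 - mp / |x|) else 1 / (1 - mm / |x|))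
    (y : ℝ) (hy : 0 < y)
    (h₂ : 0 < y + mm ∧ y + mm < b)
    (h₃ : y - mp ≤ -b)
    (h₄ : -b < y - mm ∧ y - mm < 0) :
    μ (y + mp) + μ (y + mm) + μ (y - mp) + μ (y - mm) = 4 := by
  obtain ⟨h21, h22⟩ := h₂
  obtain ⟨h41, h42⟩ := h₄
  have hb0 : 0 < b := lt_trans h21 h22
  have hy0 : y ≠ 0 := ne_of_gt hy
  have hmpb : b ≤ mp := by
    rw [hb, hmp]; nlinarith [hm₁.1, hm₂.1]
  have h1 : μ (y + mp) = (y + mp) / y := by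
    have hx : 0 < y + mp := by linarith
    rw [hμ _ (ne_of_gt hx), abs_of_pos hx, if_pos (by linarith)]
    have hd : 1 - mp / (y + mp) = y / (y + mp) := by field_simp; ring
    rw [hd, one_div_div]
  have h2' : μ (y + mm) = (y + mm) / y := by
    rw [hμ _ (ne_of_gt h21), abs_of_pos h21, if_neg (by linarith)]
    have hd : 1 - mm / (y + mm) = y / (y + mm) := by field_simp; ring
    rw [hd, one_div_div]
  have h3' : μ (y - mp) = (y - mp) / y := by
    have hx : y - mp < 0 := by linarith
    rw [hμ _ (ne_of_lt hx), abs_of_neg hx, if_pos (by linarith)]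
    have hne : mp - y ≠ 0 := ne_of_gt (by linarith)
    have hd : 1 - mp / -(y - mp) = -y / -(y - mp) := by
      rw [neg_sub]; field_simp; ring
    rw [hd, one_div_div]
    rw [div_eq_div_iff (by linarith) hy0]; ring
  have h4' : μ (y - mm) = (y - mm) / y := by
    rw [hμ _ (ne_of_lt h42), abs_of_neg h42, if_neg (by linarith)]
    have hne : mm - y ≠ 0 := ne_of_gt (by linarith)
    have hd : 1 - mm / -(y - mm) = -y / -(y - mm) := by
      rw [neg_sub]; field_simp; ring
    rw [hd, one_div_div]
    rw [div_eq_div_iff (by linarith) hy0]; ring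
  rw [h1, h2', h3', h4']
  field_simp
  ring
end

section
/- Let y > 0, 0 < β < 1, and 0 < m < 1. Then the quartic polynomial p(x) = x⁴ − y·x³ − (1 + β·m)·x² + y·β·m·x + β·m² has four real roots; that is, every complex root of p is real (p splits over ℝ). -/
open Polynomial

/-- For `y > 0`, `0 < β < 1`, `0 < m < 1`, every complex root of the
image quartic `x⁴ − y·x³ − (1 + β·m)·x² + y·β·m·x + β·m²` is real: the quartic has
four real roots (it splits over `ℝ`). -/
theorem two_point_lens_quartic_roots_real
    (y β m : ℝ) (hy : 0 < y) (hβ : β ∈ Set.Ioo (0 : ℝ) 1)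
    (hm : m ∈ Set.Ioo (0 : ℝ) 1) :
    ∀ z : ℂ,
      z ^ 4 - (y : ℂ) * z ^ 3 - ((1 : ℂ) + (β : ℂ) * (m : ℂ)) * z ^ 2
        + (y : ℂ) * (β : ℂ) * (m : ℂ) * z + (β : ℂ) * (m : ℂ) ^ 2 = 0 →
      z.im = 0 := by
  obtain ⟨hβ0, hβ1⟩ := hβ
  obtain ⟨hm0, hm1⟩ := hm
  set f : ℝ → ℝ := fun x => x^4 - y*x^3 - (1+β*m)*x^2 + y*β*m*x + β*m^2 with hf
  have hcont : Continuous f := by fun_prop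
  have hbm : 0 < β*m := by positivity
  have hbm1 : β*m < 1 := by nlinarith
  set s := Real.sqrt (β*m) with hsdef
  have hs2 : s^2 = β*m := Real.sq_sqrt hbm.le
  have hspos : 0 < s := Real.sqrt_pos.mpr hbm
  have hs1 : s < 1 := by
    nlinarith [hspos, hs2]
  have hfs : f s = β*m*(m-1) := by
    simp only [hf]
    linear_combination (s^2 - y*s - 1) * hs2
  have hfns : f (-s) = β*m*(m-1) := by
    simp only [hf]
    linear_combination (s^2 + y*s - 1) * hs2
  have hfsneg : f s < 0 := by rw [hfs]; nlinarith
  have hfnsneg : f (-s) < 0 := by rw [hfns]; nlinarith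
  have hf0 : 0 < f 0 := by simp only [hf]; norm_num; positivity
  have hL : s < y + 3 := by linarith
  have hfL : 0 < f (y + 3) := by
    simp only [hf]; nlinarith [sq_nonneg (y+3), sq_nonneg y, mul_pos hy hbm]
  have hfnL : 0 < f (-(y + 3)) := by
    simp only [hf]; nlinarith [sq_nonneg (y+3), sq_nonneg y, mul_pos hy hbm]
  -- four real roots by IVT
  have h1 : ∃ r ∈ Set.Icc (-(y+3)) (-s), f r = 0 := by
    have := intermediate_value_Icc' (by linarith : -(y+3) ≤ -s) hcont.continuousOn
    have h0 : (0:ℝ) ∈ Set.Icc (f (-s)) (f (-(y+3))) := ⟨hfnsneg.le, hfnL.le⟩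
    obtain ⟨r, hr, hr0⟩ := this h0
    exact ⟨r, hr, hr0⟩
  have h2 : ∃ r ∈ Set.Icc (-s) 0, f r = 0 := by
    have := intermediate_value_Icc (by linarith : -s ≤ 0) hcont.continuousOn
    have h0 : (0:ℝ) ∈ Set.Icc (f (-s)) (f 0) := ⟨hfnsneg.le, hf0.le⟩
    obtain ⟨r, hr, hr0⟩ := this h0
    exact ⟨r, hr, hr0⟩
  have h3 : ∃ r ∈ Set.Icc 0 s, f r = 0 := by
    have := intermediate_value_Icc' (by linarith : (0:ℝ) ≤ s) hcont.continuousOn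
    have h0 : (0:ℝ) ∈ Set.Icc (f s) (f 0) := ⟨hfsneg.le, hf0.le⟩
    obtain ⟨r, hr, hr0⟩ := this h0
    exact ⟨r, hr, hr0⟩
  have h4 : ∃ r ∈ Set.Icc s (y+3), f r = 0 := by
    have := intermediate_value_Icc (by linarith : s ≤ y+3) hcont.continuousOn
    have h0 : (0:ℝ) ∈ Set.Icc (f s) (f (y+3)) := ⟨hfsneg.le, hfL.le⟩
    obtain ⟨r, hr, hr0⟩ := this h0
    exact ⟨r, hr, hr0⟩
  obtain ⟨r1, ⟨_, hr1b⟩, hfr1⟩ := h1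
  obtain ⟨r2, ⟨hr2a, hr2b⟩, hfr2⟩ := h2
  obtain ⟨r3, ⟨hr3a, hr3b⟩, hfr3⟩ := h3
  obtain ⟨r4, ⟨hr4a, _⟩, hfr4⟩ := h4
  -- distinctness
  have h12 : r1 ≠ r2 := by
    intro h
    have : r1 = -s := le_antisymm hr1b (h ▸ hr2a)
    rw [this] at hfr1; rw [hfr1] at hfnsneg; exact lt_irrefl _ hfnsneg
  have h23 : r2 ≠ r3 := by
    intro h
    have : r2 = 0 := le_antisymm hr2b (h ▸ hr3a)
    rw [this] at hfr2; rw [hfr2] at hf0; exact lt_irrefl _ hf0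
  have h34 : r3 ≠ r4 := by
    intro h
    have : r3 = s := le_antisymm hr3b (h ▸ hr4a)
    rw [this] at hfr3; rw [hfr3] at hfsneg; exact lt_irrefl _ hfsneg
  have h13 : r1 < r3 := lt_of_le_of_lt hr1b (lt_of_lt_of_le (by linarith) hr3a)
  have h14 : r1 < r4 := lt_of_le_of_lt hr1b (lt_of_lt_of_le (by linarith) hr4a)
  have h24 : r2 < r4 := lt_of_le_of_lt hr2b (lt_of_lt_of_le hspos hr4a)
  -- the complex polynomial
  intro z hz
  by_contra hzim
  set P : Polynomial ℂ := X^4 - C (y:ℂ) * X^3 - C ((1:ℂ)+(β:ℂ)*(m:ℂ)) * X^2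
      + C ((y:ℂ)*(β:ℂ)*(m:ℂ)) * X + C ((β:ℂ)*(m:ℂ)^2) with hP
  have hdeg : P.natDegree = 4 := by rw [hP]; compute_degree!
  have hP0 : P ≠ 0 := by
    intro h
    rw [h] at hdeg
    simp at hdeg
  have hevalr : ∀ r : ℝ, f r = 0 → P.eval (r:ℂ) = 0 := by
    intro r hr
    have : ((f r : ℝ) : ℂ) = 0 := by rw [hr]; norm_num
    simp only [hf] at this
    push_cast at this
    simp only [hP, eval_add, eval_sub, eval_mul, eval_pow, eval_C, eval_X]
    linear_combination this
  have hevalz : P.eval z = 0 := by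
    simp only [hP, eval_add, eval_sub, eval_mul, eval_pow, eval_C, eval_X]
    linear_combination hz
  have hzr : ∀ r : ℝ, z ≠ (r:ℂ) := by
    intro r h
    apply hzim
    rw [h]
    simp
  have hM : (z ::ₘ {(r1:ℂ), (r2:ℂ), (r3:ℂ), (r4:ℂ)}) ≤ P.roots := by
    rw [Multiset.le_iff_subset]
    · intro a ha
      simp only [Multiset.mem_cons, Multiset.insert_eq_cons, Multiset.mem_singleton] at ha
      rw [mem_roots hP0]
      rcases ha with h|h|h|h|h <;> subst h
      · exact hevalz
      · exact hevalr r1 hfr1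
      · exact hevalr r2 hfr2
      · exact hevalr r3 hfr3
      · exact hevalr r4 hfr4
    · have hinj : ∀ a b : ℝ, (a:ℂ) = (b:ℂ) → a = b := fun a b h => by exact_mod_cast h
      simp only [Multiset.nodup_cons, Multiset.insert_eq_cons, Multiset.mem_cons,
        Multiset.mem_singleton, Multiset.nodup_singleton, and_true]
      refine ⟨?_, ?_, ?_, ?_⟩
      · push_neg
        exact ⟨hzr r1, hzr r2, hzr r3, hzr r4⟩
      · push_neg
        refine ⟨fun h => h12 (hinj _ _ h), fun h => h13.ne (hinj _ _ h),
          fun h => h14.ne (hinj _ _ h)⟩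
      · push_neg
        exact ⟨fun h => h23 (hinj _ _ h), fun h => h24.ne (hinj _ _ h)⟩
      · exact fun h => h34 (hinj _ _ h)
  have hcard := Multiset.card_le_card hM
  have hcard2 := P.card_roots' 
  simp at hcard
  rw [hdeg] at hcard2
  omega
end

section
/- Let y > 0, 0 < β < 1, and 0 < m < 1. Then the quartic polynomial p(x) = x⁴ − y·x³ − (1 + β·m)·x² + y·β·m·x + β·m² has exactly two positive real roots and exactly two negative real roots, counted with multiplicity; in particular 0 is not a root, and the two-point-lens system always produces four (possibly coincident in pairs) images of an off-axis source. -/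
open Polynomial in
/-- For `y > 0`, `0 < β < 1`, `0 < m < 1`, the image quartic
`x⁴ − y·x³ − (1 + β·m)·x² + y·β·m·x + β·m²` has exactly two positive and exactly two
negative real roots, counted with multiplicity (so it factors as
`(x−a)(x−b)(x−c)(x−d)` with `a, b > 0` and `c, d < 0`); in particular `0` is not a
root, and the two-point-lens system always produces four (possibly pairwise
coincident) images of an off-axis source. -/
theorem two_point_lens_quartic_sign_of_roots
    (y β m : ℝ) (hy : 0 < y) (hβ : β ∈ Set.Ioo (0 : ℝ) 1)
    (hm : m ∈ Set.Ioo (0 : ℝ) 1) :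
    (∃ a b c d : ℝ, 0 < a ∧ 0 < b ∧ c < 0 ∧ d < 0 ∧
      ∀ x : ℝ,
        x ^ 4 - y * x ^ 3 - (1 + β * m) * x ^ 2 + y * (β * m) * x + β * m ^ 2
          = (x - a) * (x - b) * (x - c) * (x - d)) ∧
    (0 : ℝ) ^ 4 - y * 0 ^ 3 - (1 + β * m) * 0 ^ 2 + y * (β * m) * 0 + β * m ^ 2 ≠ 0 := by
  obtain ⟨hβ0, hβ1⟩ := hβ
  obtain ⟨hm0, hm1⟩ := hm
  have hbm0 : 0 < β * m := mul_pos hβ0 hm0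
  have hbm1 : β * m < 1 := by nlinarith
  set f : ℝ → ℝ := fun x => x ^ 4 - y * x ^ 3 - (1 + β * m) * x ^ 2 + y * (β * m) * x + β * m ^ 2
    with hf
  have hfx : ∀ x : ℝ,
      f x = x ^ 4 - y * x ^ 3 - (1 + β * m) * x ^ 2 + y * (β * m) * x + β * m ^ 2 :=
    fun _ => rfl
  have hcont : Continuous f := by rw [hf]; continuity
  set t : ℝ := Real.sqrt (β * m) with htdef
  have ht0 : 0 < t := Real.sqrt_pos.mpr hbm0
  have ht2 : t ^ 2 = β * m := Real.sq_sqrt hbm0.le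
  have ht1 : t < 1 := by
    nlinarith [ht2, ht0]
  have hft : f t < 0 := by
    have : f t = β * m * (m - 1) := by rw [hfx]; linear_combination (t^2 - y*t - 1) * ht2
    rw [this]; nlinarith
  have hfnt : f (-t) < 0 := by
    have : f (-t) = β * m * (m - 1) := by rw [hfx]; linear_combination (t^2 + y*t - 1) * ht2
    rw [this]; nlinarith
  have hf0 : 0 < f 0 := by rw [hfx]; norm_num; positivity
  have hY : t < y + 2 := by linarith
  have hfY : 0 < f (y + 2) := by
    have he : f (y + 2)
        = (y+2)^2*(2*y+3-β*m) + y*(β*m)*(y+2) + β*m^2 := by rw [hfx]; ring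
    have t1 : 0 < (y+2)^2*(2*y+3-β*m) := mul_pos (by positivity) (by linarith)
    have t2 : 0 < y*(β*m)*(y+2) := by positivity
    have t3 : 0 < β*m^2 := by positivity
    linarith [he.ge, he.le]
  have hfnY : 0 < f (-(y + 2)) := by
    have he : f (-(y + 2))
        = (y+2)^2*((y+2)^2-(1+β*m)) + y*(y+2)*((y+2)^2-β*m) + β*m^2 := by rw [hfx]; ring
    have h4 : (4:ℝ) ≤ (y+2)^2 := by nlinarith
    have t1 : 0 < (y+2)^2*((y+2)^2-(1+β*m)) := mul_pos (by positivity) (by linarith)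
    have t2 : 0 < y*(y+2)*((y+2)^2-β*m) := mul_pos (by positivity) (by linarith)
    have t3 : 0 < β*m^2 := by positivity
    linarith [he.ge, he.le]
  -- four roots by IVT
  obtain ⟨r1, hr1mem, hr1⟩ := intermediate_value_Ioo' (by linarith : -(y+2) ≤ -t)
    hcont.continuousOn (Set.mem_Ioo.mpr ⟨hfnt, hfnY⟩)
  obtain ⟨r2, hr2mem, hr2⟩ := intermediate_value_Ioo (by linarith : -t ≤ (0:ℝ))
    hcont.continuousOn (Set.mem_Ioo.mpr ⟨hfnt, hf0⟩)
  obtain ⟨r3, hr3mem, hr3⟩ := intermediate_value_Ioo' (by linarith : (0:ℝ) ≤ t)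
    hcont.continuousOn (Set.mem_Ioo.mpr ⟨hft, hf0⟩)
  obtain ⟨r4, hr4mem, hr4⟩ := intermediate_value_Ioo (by linarith : t ≤ y + 2)
    hcont.continuousOn (Set.mem_Ioo.mpr ⟨hft, hfY⟩)
  obtain ⟨hr1l, hr1u⟩ := hr1mem
  obtain ⟨hr2l, hr2u⟩ := hr2mem
  obtain ⟨hr3l, hr3u⟩ := hr3mem
  obtain ⟨hr4l, hr4u⟩ := hr4mem
  -- the polynomial
  set P : ℝ[X] := X ^ 4 - C y * X ^ 3 - C (1 + β * m) * X ^ 2 + C (y * (β * m)) * X + C (β * m ^ 2)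
    with hP
  have heval : ∀ x : ℝ, P.eval x = f x := by
    intro x; rw [hfx]; simp [hP]; try ring
  have hmonic : P.Monic := by
    rw [hP]; monicity!
  have hdeg : P.natDegree = 4 := by
    rw [hP]; compute_degree!
  have hPne : P ≠ 0 := hmonic.ne_zero
  have hroot : ∀ r : ℝ, f r = 0 → r ∈ P.roots := by
    intro r hr
    rw [Polynomial.mem_roots hPne]
    simp [Polynomial.IsRoot, heval r, hr]
  set s : Multiset ℝ := {r1, r2, r3, r4} with hs
  have hnodup : s.Nodup := by
    have h12 : r1 ≠ r2 := by intro h; rw [h] at hr1u; linarith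
    have h13 : r1 ≠ r3 := by intro h; rw [h] at hr1u; linarith
    have h14 : r1 ≠ r4 := by intro h; rw [h] at hr1u; linarith
    have h23 : r2 ≠ r3 := by intro h; rw [h] at hr2u; linarith
    have h24 : r2 ≠ r4 := by intro h; rw [h] at hr2u; linarith
    have h34 : r3 ≠ r4 := by intro h; rw [h] at hr3u; linarith
    simp [hs, h12, h13, h14, h23, h24, h34]
  have hle : s ≤ P.roots := by
    rw [Multiset.le_iff_subset hnodup]
    intro a ha
    simp only [hs, Multiset.mem_cons, Multiset.mem_singleton, Multiset.insert_eq_cons] at ha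
    rcases ha with rfl | rfl | rfl | rfl
    · exact hroot _ hr1
    · exact hroot _ hr2
    · exact hroot _ hr3
    · exact hroot _ hr4
  have hcards : Multiset.card s = 4 := by simp [hs]
  have hcard : Multiset.card P.roots ≤ 4 := hdeg ▸ P.card_roots'
  have hseq : s = P.roots := Multiset.eq_of_le_of_card_le hle (by omega)
  have hfact := Polynomial.prod_multiset_X_sub_C_of_monic_of_roots_card_eq hmonic
    (by rw [← hseq, hcards, hdeg])
  rw [← hseq] at hfact
  have hprod : ∀ x : ℝ, f x = (x - r1) * (x - r2) * (x - r3) * (x - r4) := by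
    intro x
    have := congrArg (Polynomial.eval x) hfact
    rw [heval] at this
    rw [← this]
    simp [hs]
    ring
  constructor
  · exact ⟨r3, r4, r1, r2, hr3l, lt_trans ht0 hr4l, by linarith, hr2u, fun x => by
      rw [show x ^ 4 - y * x ^ 3 - (1 + β * m) * x ^ 2 + y * (β * m) * x + β * m ^ 2 = f x from rfl,
        hprod x]; ring⟩
  · have : (0:ℝ) ^ 4 - y * 0 ^ 3 - (1 + β * m) * 0 ^ 2 + y * (β * m) * 0 + β * m ^ 2 = β * m ^ 2 := by ring
    rw [this]; positivity
end

section
/- Let y > 0, 0 < β < 1, and 0 < m < 1. With P = −3y²/8 − (1 + β·m), Q = −y³/8 − (y/2)·(1 − β·m), R = −3y⁴/256 − (y²/16)·(1 − 3β·m) + β·m², and A = 2P, B = P² − 4R, C = −Q², the discriminant of the cubic resolvent satisfies D_res = ((3B − A²)/9)³ + ((2A³ − 9AB + 27C)/54)² ≤ 0; hence the cubic resolvent z³ + A·z² + B·z + C has three real roots. -/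
set_option maxHeartbeats 1600000 in
/-- For `y > 0`, `0 < β < 1`, `0 < m < 1`, the discriminant of the
cubic resolvent `z³ + A·z² + B·z + C` of the reduced image quartic satisfies
`D_res = ((3B − A²)/9)³ + ((2A³ − 9AB + 27C)/54)² ≤ 0`; hence the cubic resolvent has
three real roots. -/
theorem two_point_lens_resolvent_discriminant
    (y β m : ℝ) (hy : 0 < y) (hβ : β ∈ Set.Ioo (0 : ℝ) 1)
    (hm : m ∈ Set.Ioo (0 : ℝ) 1)
    (P Q R A B C : ℝ)
    (hP : P = -(3 * y ^ 2) / 8 - (1 + β * m))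
    (hQ : Q = -(y ^ 3) / 8 - (y / 2) * (1 - β * m))
    (hR : R = -(3 * y ^ 4) / 256 - (y ^ 2 / 16) * (1 - 3 * β * m) + β * m ^ 2)
    (hA : A = 2 * P) (hB : B = P ^ 2 - 4 * R) (hC : C = -Q ^ 2) :
    ((3 * B - A ^ 2) / 9) ^ 3 + ((2 * A ^ 3 - 9 * A * B + 27 * C) / 54) ^ 2 ≤ 0 ∧
    ∃ z₁ z₂ z₃ : ℝ, ∀ z : ℝ,
      z ^ 3 + A * z ^ 2 + B * z + C = (z - z₁) * (z - z₂) * (z - z₃) := by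
  obtain ⟨hb0, hb1⟩ := hβ
  obtain ⟨hm0, hm1⟩ := hm
  have hbm0 : 0 < β * m := mul_pos hb0 hm0
  have hbm1 : β * m < 1 := by nlinarith
  -- the image quartic
  set f : ℝ → ℝ := fun x => x ^ 4 - y * x ^ 3 - (1 + β * m) * x ^ 2
      + y * (β * m) * x + β * m ^ 2 with hfdef
  have hcont : Continuous f := by
    simp only [hfdef]; continuity
  set s : ℝ := Real.sqrt (β * m) with hsdef
  have hs2 : s ^ 2 = β * m := Real.sq_sqrt hbm0.le
  have hs0 : 0 < s := Real.sqrt_pos.mpr hbm0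
  have hs1 : s < 1 := by nlinarith
  -- sign pattern of f
  have hf0 : (0 : ℝ) < f 0 := by
    have h : f 0 = β * m ^ 2 := by
      show (0:ℝ) ^ 4 - y * 0 ^ 3 - (1 + β * m) * 0 ^ 2 + y * (β * m) * 0 + β * m ^ 2 = β * m ^ 2
      ring
    rw [h]; positivity
  have hfs : f s < 0 := by
    have h : f s = β * m * (m - 1) := by
      show s ^ 4 - y * s ^ 3 - (1 + β * m) * s ^ 2 + y * (β * m) * s + β * m ^ 2
          = β * m * (m - 1)
      linear_combination (s ^ 2 - y * s - 1) * hs2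
    rw [h]; nlinarith
  have hfns : f (-s) < 0 := by
    have h : f (-s) = β * m * (m - 1) := by
      show (-s) ^ 4 - y * (-s) ^ 3 - (1 + β * m) * (-s) ^ 2 + y * (β * m) * (-s) + β * m ^ 2
          = β * m * (m - 1)
      linear_combination (s ^ 2 + y * s - 1) * hs2
    rw [h]; nlinarith
  have hfM : (0 : ℝ) < f (y + 2) := by
    have h : f (y + 2) = ((y + 2) ^ 2 - β * m) * (2 * y + 3) + β * m * (m - 1) := by
      show (y+2) ^ 4 - y * (y+2) ^ 3 - (1 + β * m) * (y+2) ^ 2 + y * (β * m) * (y+2) + β * m ^ 2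
          = ((y + 2) ^ 2 - β * m) * (2 * y + 3) + β * m * (m - 1)
      ring
    rw [h]; nlinarith [sq_nonneg y, mul_pos hbm0 hm0]
  have hfnM : (0 : ℝ) < f (-(y + 2)) := by
    have h : f (-(y + 2)) = ((y + 2) ^ 2 - β * m) * (2 * y ^ 2 + 6 * y + 3)
        + β * m * (m - 1) := by
      show (-(y+2)) ^ 4 - y * (-(y+2)) ^ 3 - (1 + β * m) * (-(y+2)) ^ 2
          + y * (β * m) * (-(y+2)) + β * m ^ 2
          = ((y + 2) ^ 2 - β * m) * (2 * y ^ 2 + 6 * y + 3) + β * m * (m - 1)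
      ring
    rw [h]; nlinarith [sq_nonneg y, mul_pos hbm0 hm0]
  -- four real roots by the intermediate value theorem
  obtain ⟨r1, hr1I, hr1⟩ := intermediate_value_Ioo' (by linarith : -(y + 2) ≤ -s)
    hcont.continuousOn (Set.mem_Ioo.mpr ⟨hfns, hfnM⟩)
  obtain ⟨r2, hr2I, hr2⟩ := intermediate_value_Ioo (by linarith : -s ≤ 0)
    hcont.continuousOn (Set.mem_Ioo.mpr ⟨hfns, hf0⟩)
  obtain ⟨r3, hr3I, hr3⟩ := intermediate_value_Ioo' (by linarith : (0:ℝ) ≤ s)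
    hcont.continuousOn (Set.mem_Ioo.mpr ⟨hfs, hf0⟩)
  obtain ⟨r4, hr4I, hr4⟩ := intermediate_value_Ioo (by linarith : s ≤ y + 2)
    hcont.continuousOn (Set.mem_Ioo.mpr ⟨hfs, hfM⟩)
  have h1 : r1 ^ 4 - y * r1 ^ 3 - (1 + β * m) * r1 ^ 2 + y * (β * m) * r1 + β * m ^ 2 = 0 := hr1
  have h2 : r2 ^ 4 - y * r2 ^ 3 - (1 + β * m) * r2 ^ 2 + y * (β * m) * r2 + β * m ^ 2 = 0 := hr2
  have h3 : r3 ^ 4 - y * r3 ^ 3 - (1 + β * m) * r3 ^ 2 + y * (β * m) * r3 + β * m ^ 2 = 0 := hr3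
  have h4 : r4 ^ 4 - y * r4 ^ 3 - (1 + β * m) * r4 ^ 2 + y * (β * m) * r4 + β * m ^ 2 = 0 := hr4
  -- root ordering
  have o12 : r1 < r2 := lt_trans hr1I.2 hr2I.1
  have o23 : r2 < r3 := lt_trans hr2I.2 hr3I.1
  have o34 : r3 < r4 := lt_trans hr3I.2 hr4I.1
  -- Horner factorization chain
  have hc2 : r2 ^ 3 + (r1 - y) * r2 ^ 2 + (-(1 + β * m) - y * r1 + r1 ^ 2) * r2
      + (y * (β * m) - (1 + β * m) * r1 - y * r1 ^ 2 + r1 ^ 3) = 0 := by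
    have key : (r2 - r1) * (r2 ^ 3 + (r1 - y) * r2 ^ 2 + (-(1 + β * m) - y * r1 + r1 ^ 2) * r2
        + (y * (β * m) - (1 + β * m) * r1 - y * r1 ^ 2 + r1 ^ 3)) = 0 := by
      linear_combination h2 - h1
    exact (mul_eq_zero.mp key).resolve_left (sub_pos.mpr o12).ne'
  have hc3 : r3 ^ 3 + (r1 - y) * r3 ^ 2 + (-(1 + β * m) - y * r1 + r1 ^ 2) * r3
      + (y * (β * m) - (1 + β * m) * r1 - y * r1 ^ 2 + r1 ^ 3) = 0 := by
    have key : (r3 - r1) * (r3 ^ 3 + (r1 - y) * r3 ^ 2 + (-(1 + β * m) - y * r1 + r1 ^ 2) * r3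
        + (y * (β * m) - (1 + β * m) * r1 - y * r1 ^ 2 + r1 ^ 3)) = 0 := by
      linear_combination h3 - h1
    exact (mul_eq_zero.mp key).resolve_left (sub_pos.mpr (lt_trans o12 o23)).ne'
  have hc4 : r4 ^ 3 + (r1 - y) * r4 ^ 2 + (-(1 + β * m) - y * r1 + r1 ^ 2) * r4
      + (y * (β * m) - (1 + β * m) * r1 - y * r1 ^ 2 + r1 ^ 3) = 0 := by
    have key : (r4 - r1) * (r4 ^ 3 + (r1 - y) * r4 ^ 2 + (-(1 + β * m) - y * r1 + r1 ^ 2) * r4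
        + (y * (β * m) - (1 + β * m) * r1 - y * r1 ^ 2 + r1 ^ 3)) = 0 := by
      linear_combination h4 - h1
    exact (mul_eq_zero.mp key).resolve_left
      (sub_pos.mpr (lt_trans (lt_trans o12 o23) o34)).ne'
  have hq3 : r3 ^ 2 + (r1 - y + r2) * r3
      + (-(1 + β * m) - y * r1 + r1 ^ 2 + (r1 - y) * r2 + r2 ^ 2) = 0 := by
    have key : (r3 - r2) * (r3 ^ 2 + (r1 - y + r2) * r3
        + (-(1 + β * m) - y * r1 + r1 ^ 2 + (r1 - y) * r2 + r2 ^ 2)) = 0 := by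
      linear_combination hc3 - hc2
    exact (mul_eq_zero.mp key).resolve_left (sub_pos.mpr o23).ne'
  have hq4 : r4 ^ 2 + (r1 - y + r2) * r4
      + (-(1 + β * m) - y * r1 + r1 ^ 2 + (r1 - y) * r2 + r2 ^ 2) = 0 := by
    have key : (r4 - r2) * (r4 ^ 2 + (r1 - y + r2) * r4
        + (-(1 + β * m) - y * r1 + r1 ^ 2 + (r1 - y) * r2 + r2 ^ 2)) = 0 := by
      linear_combination hc4 - hc2
    exact (mul_eq_zero.mp key).resolve_left (sub_pos.mpr (lt_trans o23 o34)).ne'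
  have hlin : r4 + r1 + r2 + r3 - y = 0 := by
    have key : (r4 - r3) * (r4 + r1 + r2 + r3 - y) = 0 := by
      linear_combination hq4 - hq3
    exact (mul_eq_zero.mp key).resolve_left (sub_pos.mpr o34).ne'
  -- full factorization of the quartic
  have hfac : ∀ x : ℝ, x ^ 4 - y * x ^ 3 - (1 + β * m) * x ^ 2 + y * (β * m) * x + β * m ^ 2
      = (x - r1) * (x - r2) * (x - r3) * (x - r4) := by
    intro x
    linear_combination h1 + (x - r1) * hc2 + (x - r1) * (x - r2) * hq3
      + (x - r1) * (x - r2) * (x - r3) * hlin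
  -- reduced quartic roots
  obtain ⟨t1, ht1⟩ : ∃ t : ℝ, t = r1 - y / 4 := ⟨_, rfl⟩
  obtain ⟨t2, ht2⟩ : ∃ t : ℝ, t = r2 - y / 4 := ⟨_, rfl⟩
  obtain ⟨t3, ht3⟩ : ∃ t : ℝ, t = r3 - y / 4 := ⟨_, rfl⟩
  obtain ⟨t4, ht4⟩ : ∃ t : ℝ, t = r4 - y / 4 := ⟨_, rfl⟩
  have hred : ∀ z : ℝ, z ^ 4 + P * z ^ 2 + Q * z + R
      = (z - t1) * (z - t2) * (z - t3) * (z - t4) := by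
    intro z
    rw [hP, hQ, hR, ht1, ht2, ht3, ht4]
    linear_combination hfac (z + y / 4)
  have hv0 := hred 0
  have hv1 := hred 1
  have hvm1 := hred (-1)
  have hv2 := hred 2
  have hvm2 := hred (-2)
  -- symmetric function relations
  have he1 : t1 + t2 + t3 + t4 = 0 := by
    linear_combination (1/12 : ℝ) * hv2 - (1/12 : ℝ) * hvm2 - (1/6 : ℝ) * hv1
      + (1/6 : ℝ) * hvm1
  have he2 : P = t1*t2 + t1*t3 + t1*t4 + t2*t3 + t2*t4 + t3*t4 := by
    linear_combination (1/2 : ℝ) * hv1 + (1/2 : ℝ) * hvm1 - hv0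
  have he3 : Q = -(t1*t2*t3 + t1*t2*t4 + t1*t3*t4 + t2*t3*t4) := by
    linear_combination (2/3 : ℝ) * hv1 - (2/3 : ℝ) * hvm1 - (1/12 : ℝ) * hv2
      + (1/12 : ℝ) * hvm2
  have he4 : R = t1*t2*t3*t4 := by
    linear_combination hv0
  -- the three real roots of the resolvent cubic
  have sA : A = -((t1+t2)^2 + (t1+t3)^2 + (t1+t4)^2) := by
    linear_combination hA + 2 * he2 + (3*t1 + t2 + t3 + t4) * he1
  have sB : B = (t1+t2)^2 * (t1+t3)^2 + (t1+t2)^2 * (t1+t4)^2 + (t1+t3)^2 * (t1+t4)^2 := by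
    linear_combination hB
      + (P + (t1*t2 + t1*t3 + t1*t4 + t2*t3 + t2*t4 + t3*t4)) * he2 - 4 * he4
      + (2*t2*t3*t4 - t1^2*(t2 + t3 + t4) - 3*t1^3) * he1
  have sC : C = -((t1+t2)^2 * (t1+t3)^2 * (t1+t4)^2) := by
    linear_combination hC
      + ((t1*t2*t3 + t1*t2*t4 + t1*t3*t4 + t2*t3*t4) - Q) * he3
      + (2*t1^2*t2*t3*t4 + 2*t1^3*(t3*t4 + t2*t4 + t2*t3) + t1^4*(t2 + t3 + t4) + t1^5) * he1
  constructor
  · have key : ((3 * B - A ^ 2) / 9) ^ 3 + ((2 * A ^ 3 - 9 * A * B + 27 * C) / 54) ^ 2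
        = -(((t1+t2)^2 - (t1+t3)^2) * ((t1+t2)^2 - (t1+t4)^2)
            * ((t1+t3)^2 - (t1+t4)^2)) ^ 2 / 108 := by
      rw [sA, sB, sC]; ring
    rw [key]
    have hsq := sq_nonneg (((t1+t2)^2 - (t1+t3)^2) * ((t1+t2)^2 - (t1+t4)^2)
      * ((t1+t3)^2 - (t1+t4)^2))
    exact div_nonpos_of_nonpos_of_nonneg (neg_nonpos.mpr hsq) (by norm_num)
  · exact ⟨(t1+t2)^2, (t1+t3)^2, (t1+t4)^2, fun z => by rw [sA, sB, sC]; ring⟩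
end

section
/- Let 0 < β < 1, 0 < m < 1, and y > 0. Define F(x) = 1 − m/x² − (1 − m)/(x² − β·m) and J(x) = F(x)·(F(x) + x·F′(x)) for x with x ≠ 0 and x² ≠ β·m. Suppose x₁, x₂, x₃, x₄ are the four distinct real roots of the quartic x⁴ − y·x³ − (1 + β·m)·x² + y·β·m·x + β·m² = 0, and assume xᵢ² ≠ β·m and J(xᵢ) ≠ 0 for each i. Then the signed magnifications μᵢ = 1/J(xᵢ) satisfy μ₁ + μ₂ + μ₃ + μ₄ = 1. -/
lemma cubic_four_roots (a b c d x₁ x₂ x₃ x₄ : ℝ)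
    (h12 : x₁ ≠ x₂) (h13 : x₁ ≠ x₃) (h14 : x₁ ≠ x₄)
    (h23 : x₂ ≠ x₃) (h24 : x₂ ≠ x₄) (h34 : x₃ ≠ x₄)
    (e₁ : a*x₁^3 + b*x₁^2 + c*x₁ + d = 0)
    (e₂ : a*x₂^3 + b*x₂^2 + c*x₂ + d = 0)
    (e₃ : a*x₃^3 + b*x₃^2 + c*x₃ + d = 0)
    (e₄ : a*x₄^3 + b*x₄^2 + c*x₄ + d = 0) :
    a = 0 ∧ b = 0 ∧ c = 0 ∧ d = 0 := by
  have g12 : a*(x₁^2+x₁*x₂+x₂^2) + b*(x₁+x₂) + c = 0 := by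
    apply mul_left_cancel₀ (sub_ne_zero.mpr h12)
    linear_combination e₁ - e₂
  have g13 : a*(x₁^2+x₁*x₃+x₃^2) + b*(x₁+x₃) + c = 0 := by
    apply mul_left_cancel₀ (sub_ne_zero.mpr h13)
    linear_combination e₁ - e₃
  have g14 : a*(x₁^2+x₁*x₄+x₄^2) + b*(x₁+x₄) + c = 0 := by
    apply mul_left_cancel₀ (sub_ne_zero.mpr h14)
    linear_combination e₁ - e₄
  have k3 : a*(x₁+x₂+x₃) + b = 0 := by
    apply mul_left_cancel₀ (sub_ne_zero.mpr h23)
    linear_combination g12 - g13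
  have k4 : a*(x₁+x₂+x₄) + b = 0 := by
    apply mul_left_cancel₀ (sub_ne_zero.mpr h24)
    linear_combination g12 - g14
  have ha : a = 0 := by
    apply mul_left_cancel₀ (sub_ne_zero.mpr h34)
    linear_combination k3 - k4
  have hb : b = 0 := by linear_combination k3 - (x₁+x₂+x₃)*ha
  have hc : c = 0 := by linear_combination g12 - (x₁^2+x₁*x₂+x₂^2)*ha - (x₁+x₂)*hb
  have hd : d = 0 := by linear_combination e₁ - x₁^3*ha - x₁^2*hb - x₁*hc
  exact ⟨ha, hb, hc, hd⟩

lemma derivF (β m : ℝ) (F : ℝ → ℝ)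
    (hF : ∀ x : ℝ, F x = 1 - m / x ^ 2 - (1 - m) / (x ^ 2 - β * m))
    (x : ℝ) (hx : x ≠ 0) (hx2 : x ^ 2 - β * m ≠ 0) :
    deriv F x = 2*m*x / (x^2)^2 + 2*(1-m)*x / ((x^2 - β*m)^2) := by
  have hFe : F = fun t : ℝ => 1 - m / t ^ 2 - (1 - m) / (t ^ 2 - β * m) := funext hF
  have hsq : HasDerivAt (fun t : ℝ => t ^ 2) (2 * x) x := by
    simpa using hasDerivAt_pow 2 x
  have h1 : HasDerivAt (fun t : ℝ => m / t ^ 2)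
      ((0 * x ^ 2 - m * (2 * x)) / (x ^ 2) ^ 2) x :=
    (hasDerivAt_const x m).div hsq (pow_ne_zero 2 hx)
  have h2 : HasDerivAt (fun t : ℝ => (1 - m) / (t ^ 2 - β * m))
      ((0 * (x ^ 2 - β * m) - (1 - m) * (2 * x)) / (x ^ 2 - β * m) ^ 2) x :=
    (hasDerivAt_const x (1 - m)).div (hsq.sub_const (β * m)) hx2
  have h : HasDerivAt F
      (0 - (0 * x ^ 2 - m * (2 * x)) / (x ^ 2) ^ 2
        - (0 * (x ^ 2 - β * m) - (1 - m) * (2 * x)) / (x ^ 2 - β * m) ^ 2) x := by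
    rw [hFe]
    exact ((hasDerivAt_const x (1:ℝ)).sub h1).sub h2
  rw [h.deriv]
  field_simp
  ring

lemma per_root (β m y : ℝ) (F J : ℝ → ℝ)
    (hF : ∀ x : ℝ, F x = 1 - m / x ^ 2 - (1 - m) / (x ^ 2 - β * m))
    (hJ : ∀ x : ℝ, J x = F x * (F x + x * deriv F x))
    (x : ℝ) (hx : x ≠ 0) (hd : x ^ 2 - β * m ≠ 0)
    (hroot : x ^ 4 - y * x ^ 3 - (1 + β * m) * x ^ 2 + y * (β * m) * x + β * m ^ 2 = 0) :
    J x * (x ^ 2 * (x ^ 2 - β * m)) =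
      y * (4 * x ^ 3 - 3 * y * x ^ 2 - 2 * (1 + β * m) * x + y * (β * m)) := by
  have hFv : F x = y / x := by
    rw [hF]
    generalize hD : x ^ 2 - β * m = D at hd ⊢
    field_simp
    subst hD
    linear_combination hroot
  have hG : F x + x * deriv F x =
      (x^6 + (1 - 2*(β*m))*x^4 + ((β*m)^2 + β*m - 3*(β*m)*m)*x^2 + m*(β*m)^2)
        / (x^2 * (x^2 - β*m)^2) := by
    rw [hF, derivF β m F hF x hx hd]
    generalize hD : x ^ 2 - β * m = D at hd ⊢
    field_simp
    subst hD
    ring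
  rw [hJ, hG, hFv]
  rw [div_mul_div_comm, div_mul_eq_mul_div, div_eq_iff (mul_ne_zero hx (mul_ne_zero (pow_ne_zero 2 hx) (pow_ne_zero 2 hd)))]
  linear_combination y * x ^ 2 * (x ^ 2 - β * m) * (β * m - 3 * x ^ 2) * hroot

set_option maxHeartbeats 2000000 in
/-- **magnification invariant, two point lenses.** With
`F x = 1 − m/x² − (1−m)/(x² − β·m)` and Jacobian `J x = F x·(F x + x·F' x)`, if
`x₁, x₂, x₃, x₄` are the four distinct real roots of the image quartic
`x⁴ − y·x³ − (1 + β·m)·x² + y·β·m·x + β·m² = 0` with `xᵢ² ≠ β·m` and `J xᵢ ≠ 0`,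
then the signed magnifications `μᵢ = 1/J xᵢ` sum to `1`. -/
theorem two_point_lens_magnification_invariant
    (β m y : ℝ) (hβ : β ∈ Set.Ioo (0 : ℝ) 1) (hm : m ∈ Set.Ioo (0 : ℝ) 1)
    (hy : 0 < y)
    (F J : ℝ → ℝ)
    (hF : ∀ x : ℝ, F x = 1 - m / x ^ 2 - (1 - m) / (x ^ 2 - β * m))
    (hJ : ∀ x : ℝ, J x = F x * (F x + x * deriv F x))
    (x₁ x₂ x₃ x₄ : ℝ)
    (hdist : x₁ ≠ x₂ ∧ x₁ ≠ x₃ ∧ x₁ ≠ x₄ ∧ x₂ ≠ x₃ ∧ x₂ ≠ x₄ ∧ x₃ ≠ x₄)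
    (hroot₁ : x₁ ^ 4 - y * x₁ ^ 3 - (1 + β * m) * x₁ ^ 2 + y * (β * m) * x₁ + β * m ^ 2 = 0)
    (hroot₂ : x₂ ^ 4 - y * x₂ ^ 3 - (1 + β * m) * x₂ ^ 2 + y * (β * m) * x₂ + β * m ^ 2 = 0)
    (hroot₃ : x₃ ^ 4 - y * x₃ ^ 3 - (1 + β * m) * x₃ ^ 2 + y * (β * m) * x₃ + β * m ^ 2 = 0)
    (hroot₄ : x₄ ^ 4 - y * x₄ ^ 3 - (1 + β * m) * x₄ ^ 2 + y * (β * m) * x₄ + β * m ^ 2 = 0)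
    (hne₁ : x₁ ^ 2 ≠ β * m) (hne₂ : x₂ ^ 2 ≠ β * m)
    (hne₃ : x₃ ^ 2 ≠ β * m) (hne₄ : x₄ ^ 2 ≠ β * m)
    (hJ₁ : J x₁ ≠ 0) (hJ₂ : J x₂ ≠ 0) (hJ₃ : J x₃ ≠ 0) (hJ₄ : J x₄ ≠ 0) :
    1 / J x₁ + 1 / J x₂ + 1 / J x₃ + 1 / J x₄ = 1 := by
  obtain ⟨h12, h13, h14, h23, h24, h34⟩ := hdist
  have hy' : y ≠ 0 := ne_of_gt hy
  have hbm : 0 < β * m ^ 2 := mul_pos hβ.1 (pow_pos hm.1 2)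
  have hx₁ : x₁ ≠ 0 := by intro h; rw [h] at hroot₁; nlinarith
  have hx₂ : x₂ ≠ 0 := by intro h; rw [h] at hroot₂; nlinarith
  have hx₃ : x₃ ≠ 0 := by intro h; rw [h] at hroot₃; nlinarith
  have hx₄ : x₄ ≠ 0 := by intro h; rw [h] at hroot₄; nlinarith
  have hd₁ : x₁ ^ 2 - β * m ≠ 0 := sub_ne_zero.mpr hne₁
  have hd₂ : x₂ ^ 2 - β * m ≠ 0 := sub_ne_zero.mpr hne₂
  have hd₃ : x₃ ^ 2 - β * m ≠ 0 := sub_ne_zero.mpr hne₃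
  have hd₄ : x₄ ^ 2 - β * m ≠ 0 := sub_ne_zero.mpr hne₄
  have key₁ := per_root β m y F J hF hJ x₁ hx₁ hd₁ hroot₁
  have key₂ := per_root β m y F J hF hJ x₂ hx₂ hd₂ hroot₂
  have key₃ := per_root β m y F J hF hJ x₃ hx₃ hd₃ hroot₃
  have key₄ := per_root β m y F J hF hJ x₄ hx₄ hd₄ hroot₄
  -- Vieta
  obtain ⟨hA, hB, hC, hD⟩ := cubic_four_roots
    ((x₁+x₂+x₃+x₄) - y)
    (-(1+β*m) - (x₁*x₂+x₁*x₃+x₁*x₄+x₂*x₃+x₂*x₄+x₃*x₄))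
    (y*(β*m) + (x₁*x₂*x₃+x₁*x₂*x₄+x₁*x₃*x₄+x₂*x₃*x₄))
    (β*m^2 - x₁*x₂*x₃*x₄)
    x₁ x₂ x₃ x₄ h12 h13 h14 h23 h24 h34
    (by linear_combination hroot₁) (by linear_combination hroot₂)
    (by linear_combination hroot₃) (by linear_combination hroot₄)
  have hsum : x₁ + x₂ + x₃ + x₄ = y := by linarith
  have hP₁ : 4*x₁^3 - 3*y*x₁^2 - 2*(1+β*m)*x₁ + y*(β*m)
      = (x₁-x₂)*(x₁-x₃)*(x₁-x₄) := by
    linear_combination 3*x₁^2*hA + 2*x₁*hB + hC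
  have hP₂ : 4*x₂^3 - 3*y*x₂^2 - 2*(1+β*m)*x₂ + y*(β*m)
      = (x₂-x₁)*(x₂-x₃)*(x₂-x₄) := by
    linear_combination 3*x₂^2*hA + 2*x₂*hB + hC
  have hP₃ : 4*x₃^3 - 3*y*x₃^2 - 2*(1+β*m)*x₃ + y*(β*m)
      = (x₃-x₁)*(x₃-x₂)*(x₃-x₄) := by
    linear_combination 3*x₃^2*hA + 2*x₃*hB + hC
  have hP₄ : 4*x₄^3 - 3*y*x₄^2 - 2*(1+β*m)*x₄ + y*(β*m)
      = (x₄-x₁)*(x₄-x₂)*(x₄-x₃) := by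
    linear_combination 3*x₄^2*hA + 2*x₄*hB + hC
  have hD₁ : (x₁-x₂)*(x₁-x₃)*(x₁-x₄) ≠ 0 :=
    mul_ne_zero (mul_ne_zero (sub_ne_zero.mpr h12) (sub_ne_zero.mpr h13)) (sub_ne_zero.mpr h14)
  have hD₂ : (x₂-x₁)*(x₂-x₃)*(x₂-x₄) ≠ 0 :=
    mul_ne_zero (mul_ne_zero (sub_ne_zero.mpr (Ne.symm h12)) (sub_ne_zero.mpr h23)) (sub_ne_zero.mpr h24)
  have hD₃ : (x₃-x₁)*(x₃-x₂)*(x₃-x₄) ≠ 0 :=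
    mul_ne_zero (mul_ne_zero (sub_ne_zero.mpr (Ne.symm h13)) (sub_ne_zero.mpr (Ne.symm h23))) (sub_ne_zero.mpr h34)
  have hD₄ : (x₄-x₁)*(x₄-x₂)*(x₄-x₃) ≠ 0 :=
    mul_ne_zero (mul_ne_zero (sub_ne_zero.mpr (Ne.symm h14)) (sub_ne_zero.mpr (Ne.symm h24))) (sub_ne_zero.mpr (Ne.symm h34))
  have hJv₁ : J x₁ = y * ((x₁-x₂)*(x₁-x₃)*(x₁-x₄)) / (x₁^2*(x₁^2-β*m)) := by
    rw [eq_div_iff (mul_ne_zero (pow_ne_zero 2 hx₁) hd₁), key₁, hP₁]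
  have hJv₂ : J x₂ = y * ((x₂-x₁)*(x₂-x₃)*(x₂-x₄)) / (x₂^2*(x₂^2-β*m)) := by
    rw [eq_div_iff (mul_ne_zero (pow_ne_zero 2 hx₂) hd₂), key₂, hP₂]
  have hJv₃ : J x₃ = y * ((x₃-x₁)*(x₃-x₂)*(x₃-x₄)) / (x₃^2*(x₃^2-β*m)) := by
    rw [eq_div_iff (mul_ne_zero (pow_ne_zero 2 hx₃) hd₃), key₃, hP₃]
  have hJv₄ : J x₄ = y * ((x₄-x₁)*(x₄-x₂)*(x₄-x₃)) / (x₄^2*(x₄^2-β*m)) := by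
    rw [eq_div_iff (mul_ne_zero (pow_ne_zero 2 hx₄) hd₄), key₄, hP₄]
  have hsne : x₁ + x₂ + x₃ + x₄ ≠ 0 := by rw [hsum]; exact hy'
  rw [hJv₁, hJv₂, hJv₃, hJv₄, one_div_div, one_div_div, one_div_div, one_div_div, ← hsum]
  field_simp
  ring
end
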